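/- Let 𝓛 be a nonnegative self-adjoint operator on a Hilbert space with smallest nonzero eigenvalue λ_min, let 0 < λ₀ < λ_min with λ₀ ≠ (n-1)²/(4n²), and define c_E as in the damped-oscillator analysis. Then for all u, v in the orthogonal complement of ker 𝓛, the quadratic form Q(u,v) = ⟨v, v⟩ + n²⟨u, 𝓛u⟩ + 2c_E⟨v, u⟩ is positive definite: there is a constant c > 0 with Q(u,v) ≥ c(‖u‖² + ‖v‖²). -/

import Mathlib

open scoped RealInnerProductSpace

/-- Eigen-expansion of `⟪b i, L u⟫`. -/
lemma inner_basis_apply_L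
    {H : Type*} [NormedAddCommGroup H] [InnerProductSpace ℝ H] [CompleteSpace H]
    {ι : Type*} (b : HilbertBasis ι ℝ H)
    (L : H →L[ℝ] H) (μ : ι → ℝ)
    (heig : ∀ i, L (b i) = μ i • b i) (u : H) (i : ι) :
    ⟪b i, L u⟫ = μ i * ⟪b i, u⟫ := by
  classical
  have h1 : HasSum (fun j => b.repr u j • b j) u := b.hasSum_repr u
  have h2 := (h1.mapL L).mapL (innerSL ℝ (b i))
  have h3 : (fun j => (innerSL ℝ (b i)) (L (b.repr u j • b j)))
      = fun j => if j = i then μ i * ⟪b i, u⟫ else 0 := by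
    funext j
    rcases eq_or_ne j i with rfl | hji
    · simp only [if_pos rfl, ContinuousLinearMap.map_smul, heig j, innerSL_apply_apply,
        real_inner_smul_right, b.repr_apply_apply, real_inner_self_eq_norm_sq,
        b.orthonormal.1 j, smul_eq_mul]
      simp [mul_comm]
    · have h0 : ⟪b i, b j⟫ = 0 := b.orthonormal.2 (Ne.symm hji)
      simp only [if_neg hji, ContinuousLinearMap.map_smul, heig j, innerSL_apply_apply,
        real_inner_smul_right, h0, smul_eq_mul, mul_zero]
  rw [h3] at h2
  simp only [innerSL_apply_apply] at h2
  have h4 := h2.unique (hasSum_ite_eq i _)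
  simpa using h4

/-- Spectral gap inequality on the orthogonal complement of the kernel. -/
lemma gap_ineq
    {H : Type*} [NormedAddCommGroup H] [InnerProductSpace ℝ H] [CompleteSpace H]
    {ι : Type*} (b : HilbertBasis ι ℝ H)
    (L : H →L[ℝ] H) (μ : ι → ℝ)
    (heig : ∀ i, L (b i) = μ i • b i)
    (lamMin : ℝ) (hlamMin : 0 < lamMin)
    (hmin : ∀ i, μ i = 0 ∨ lamMin ≤ μ i)
    (u : H) (hu : ∀ w : H, L w = 0 → ⟪w, u⟫ = 0) :
    lamMin * ‖u‖ ^ 2 ≤ ⟪u, L u⟫ := by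
  have hLu : HasSum (fun i => μ i * ⟪b i, u⟫ ^ 2) ⟪u, L u⟫ := by
    have h := b.hasSum_inner_mul_inner u (L u)
    have heq : (fun i => μ i * ⟪b i, u⟫ ^ 2) = fun i => ⟪u, b i⟫ * ⟪b i, L u⟫ := by
      funext i
      rw [inner_basis_apply_L b L μ heig u i, real_inner_comm u (b i)]
      ring
    rwa [heq]
  have hnorm : HasSum (fun i => lamMin * ⟪b i, u⟫ ^ 2) (lamMin * ‖u‖ ^ 2) := by
    have h := (b.hasSum_inner_mul_inner u u).mul_left lamMin
    have heq : (fun i => lamMin * ⟪b i, u⟫ ^ 2) = fun i => lamMin * (⟪u, b i⟫ * ⟪b i, u⟫) := by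
      funext i
      rw [real_inner_comm u (b i)]
      ring
    rw [heq]
    rwa [real_inner_self_eq_norm_sq u] at h
  refine hasSum_le (fun i => ?_) hnorm hLu
  rcases hmin i with h0 | hge
  · have hLbi : L (b i) = 0 := by rw [heig i, h0, zero_smul]
    rw [hu (b i) hLbi, h0]
    norm_num
  · have := sq_nonneg (⟪b i, u⟫ : ℝ)
    nlinarith

/-- coercivity of the corrected energy.  For a nonnegative
self-adjoint operator `𝓛` with smallest nonzero eigenvalue `λ_min`, and
`0 < λ₀ < λ_min` with `λ₀ ≠ (n-1)²/(4n²)`, the quadratic form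
`Q(u,v) = ‖v‖² + n²⟨u,𝓛u⟩ + 2c_E⟨v,u⟩` is positive definite on
`(ker 𝓛)^⊥ × (ker 𝓛)^⊥`. -/
theorem corrected_energy_coercive
    {H : Type*} [NormedAddCommGroup H] [InnerProductSpace ℝ H] [CompleteSpace H]
    {ι : Type*} (b : HilbertBasis ι ℝ H)
    (L : H →L[ℝ] H) (μ : ι → ℝ)
    (heig : ∀ i, L (b i) = μ i • b i)
    (hnonneg : ∀ i, 0 ≤ μ i)
    (lamMin : ℝ) (hlamMin : 0 < lamMin)
    (hmin : ∀ i, μ i = 0 ∨ lamMin ≤ μ i)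
    (n lam0 cE : ℝ) (hn : 2 ≤ n)
    (hlam0 : 0 < lam0) (hlt : lam0 < lamMin)
    (hne : lam0 ≠ (n - 1) ^ 2 / (4 * n ^ 2))
    (hcE : cE = if (n - 1) ^ 2 / (4 * n ^ 2) < lam0 then (n - 1) / 2
                else 2 * n ^ 2 * lam0 / (n - 1)) :
    ∃ c : ℝ, 0 < c ∧ ∀ u v : H,
      (∀ w : H, L w = 0 → ⟪w, u⟫ = 0) → (∀ w : H, L w = 0 → ⟪w, v⟫ = 0) →
      c * (‖u‖ ^ 2 + ‖v‖ ^ 2) ≤ ‖v‖ ^ 2 + n ^ 2 * ⟪u, L u⟫ + 2 * cE * ⟪v, u⟫ := by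
  have hn1 : (0:ℝ) < n - 1 := by linarith
  have hn0 : (0:ℝ) < n := by linarith
  have hn2 : (0:ℝ) < 4 * n ^ 2 := by positivity
  set A : ℝ := n ^ 2 * lamMin with hA
  have hA0 : 0 < A := by positivity
  have hkey : 0 ≤ cE ∧ cE ^ 2 < A := by
    by_cases hcase : (n - 1) ^ 2 / (4 * n ^ 2) < lam0
    · rw [hcE, if_pos hcase]
      refine ⟨by positivity, ?_⟩
      have h1 : (n - 1) ^ 2 < 4 * n ^ 2 * lam0 := by
        rw [div_lt_iff₀ hn2] at hcase; linarith
      nlinarith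
    · rw [hcE, if_neg hcase]
      push_neg at hcase
      have hstrict : lam0 < (n - 1) ^ 2 / (4 * n ^ 2) := lt_of_le_of_ne hcase hne
      have h1 : 4 * n ^ 2 * lam0 < (n - 1) ^ 2 := by
        rw [lt_div_iff₀ hn2] at hstrict; linarith
      refine ⟨by positivity, ?_⟩
      rw [div_pow, div_lt_iff₀ (by positivity : (0:ℝ) < (n - 1) ^ 2)]
      nlinarith [mul_lt_mul_of_pos_left h1 (show (0:ℝ) < n ^ 2 * lam0 by positivity),
        mul_lt_mul_of_pos_right hlt (show (0:ℝ) < n ^ 2 * (n - 1) ^ 2 by positivity)]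
  obtain ⟨hcE0, hcEA⟩ := hkey
  set c : ℝ := (A - cE ^ 2) / (A + 1) with hc
  have hc0 : 0 < c := div_pos (by linarith) (by linarith)
  refine ⟨c, hc0, fun u v hu hv => ?_⟩
  have hgap : lamMin * ‖u‖ ^ 2 ≤ ⟪u, L u⟫ :=
    gap_ineq b L μ heig lamMin hlamMin hmin u hu
  have hCS' : |⟪v, u⟫| ≤ ‖v‖ * ‖u‖ := abs_real_inner_le_norm v u
  have hCS : -(‖v‖ * ‖u‖) ≤ ⟪v, u⟫ := by
    have := neg_abs_le (⟪v, u⟫ : ℝ); linarith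
  set x := ‖u‖ with hx
  set y := ‖v‖ with hy
  have hx0 : 0 ≤ x := norm_nonneg u
  have hy0 : 0 ≤ y := norm_nonneg v
  have h1c : 0 < 1 - c := by
    have : c < 1 := by
      rw [hc, div_lt_one (by linarith)]; nlinarith
    linarith
  have hdet : cE ^ 2 ≤ (A - c) * (1 - c) := by
    have hAc : A - c = (A ^ 2 + cE ^ 2) / (A + 1) := by
      rw [hc]; field_simp; try ring
    have h1c' : 1 - c = (1 + cE ^ 2) / (A + 1) := by
      rw [hc]; field_simp; try ring
    rw [hAc, h1c', div_mul_div_comm, le_div_iff₀ (by positivity)]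
    nlinarith [sq_nonneg (A - cE ^ 2)]
  have hquad : c * (x ^ 2 + y ^ 2) ≤ y ^ 2 + A * x ^ 2 - 2 * cE * (x * y) := by
    nlinarith [sq_nonneg ((1 - c) * y - cE * x),
      mul_nonneg (mul_nonneg (sub_nonneg.mpr hdet) (sq_nonneg x)) h1c.le,
      mul_pos h1c h1c, sq_nonneg x, sq_nonneg y]
  have hAx : A * x ^ 2 ≤ n ^ 2 * ⟪u, L u⟫ := by
    have h := mul_le_mul_of_nonneg_left hgap (by positivity : (0:ℝ) ≤ n ^ 2)
    calc A * x ^ 2 = n ^ 2 * (lamMin * x ^ 2) := by rw [hA]; ring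
      _ ≤ n ^ 2 * ⟪u, L u⟫ := h
  have hcross : -(2 * cE * (x * y)) ≤ 2 * cE * ⟪v, u⟫ := by
    have h := mul_le_mul_of_nonneg_left hCS (by linarith : (0:ℝ) ≤ 2 * cE)
    calc -(2 * cE * (x * y)) = 2 * cE * (-(y * x)) := by ring
      _ ≤ 2 * cE * ⟪v, u⟫ := h
  linarith [hquad, hAx, hcross]
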